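/- For every real t > 0 and all i ≠ j with 1 ≤ i, j ≤ n, the operators d(t) and U_{ij} on P_n ⊗ Λ commute: d(t) ∘ U_{ij} = U_{ij} ∘ d(t). -/

import Mathlib

open scoped TensorProduct

noncomputable section

namespace HeisenbergModel

variable (n : ℕ)

/-- Algebraic model of anti-Fock space: the polynomial algebra `ℂ[x_1,…,x_n]`. -/
abbrev P := MvPolynomial (Fin n) ℂ

/-- The `(2n+1)`-dimensional coefficient space with distinguished basis
`τ^1,…,τ^n, τ^{1̄},…,τ^{n̄}, τ^w`. -/
abbrev Vc := Fin (2 * n + 1) → ℂ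

/-- The exterior algebra `Λ = ⋀ V`. -/
abbrev Lam := ExteriorAlgebra ℂ (Vc n)

/-- The space `P_n ⊗ Λ` on which all operators act. -/
abbrev PL := P n ⊗[ℂ] Lam n

/-- Index of the basis vector `τ^j`. -/
def idx1 (j : Fin n) : Fin (2 * n + 1) := ⟨j.1, by omega⟩

/-- Index of the basis vector `τ^{j̄}`. -/
def idx2 (j : Fin n) : Fin (2 * n + 1) := ⟨n + j.1, by omega⟩

/-- Index of the basis vector `τ^w`. -/
def idxw : Fin (2 * n + 1) := ⟨2 * n, by omega⟩

/-- The distinguished basis vectors of `V`. -/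
def tau (i : Fin (2 * n + 1)) : Vc n := Pi.single i 1

/-- The dual-basis functionals on `V`. -/
def dualf (i : Fin (2 * n + 1)) : Module.Dual ℂ (Vc n) := LinearMap.proj i

/-- Annihilation operator `a_j = ∂/∂x_j` on `P_n`. -/
def aOp (j : Fin n) : P n →ₗ[ℂ] P n := (MvPolynomial.pderiv j).toLinearMap

/-- Creation operator `a_j^* = (multiplication by x_j)` on `P_n`. -/
def aStarOp (j : Fin n) : P n →ₗ[ℂ] P n := LinearMap.mulLeft ℂ (MvPolynomial.X j)

/-- Left exterior multiplication `e(v)` on `Λ`. -/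
def eMulV (v : Vc n) : Lam n →ₗ[ℂ] Lam n := LinearMap.mulLeft ℂ (ExteriorAlgebra.ι ℂ v)

/-- Interior multiplication (left contraction) by a dual functional on `Λ`. -/
def iMulF (f : Module.Dual ℂ (Vc n)) : Lam n →ₗ[ℂ] Lam n :=
  CliffordAlgebra.contractLeft (Q := (0 : QuadraticForm ℂ (Vc n))) f

/-- Lift an operator on `P_n` to `P_n ⊗ Λ` (acting on the first factor). -/
def onP (f : P n →ₗ[ℂ] P n) : PL n →ₗ[ℂ] PL n := LinearMap.rTensor (Lam n) f

/-- Lift an operator on `Λ` to `P_n ⊗ Λ` (acting on the second factor). -/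
def onL (f : Lam n →ₗ[ℂ] Lam n) : PL n →ₗ[ℂ] PL n := LinearMap.lTensor (P n) f

/-- `a_j` acting on `P_n ⊗ Λ`. -/
def A (j : Fin n) : PL n →ₗ[ℂ] PL n := onP n (aOp n j)

/-- `a_j^*` acting on `P_n ⊗ Λ`. -/
def Astar (j : Fin n) : PL n →ₗ[ℂ] PL n := onP n (aStarOp n j)

/-- `e(τ^j)` acting on `P_n ⊗ Λ`. -/
def E1 (j : Fin n) : PL n →ₗ[ℂ] PL n := onL n (eMulV n (tau n (idx1 n j)))

/-- `e(τ^{j̄})` acting on `P_n ⊗ Λ`. -/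
def E2 (j : Fin n) : PL n →ₗ[ℂ] PL n := onL n (eMulV n (tau n (idx2 n j)))

/-- `e(τ^w)` acting on `P_n ⊗ Λ`. -/
def Ew : PL n →ₗ[ℂ] PL n := onL n (eMulV n (tau n (idxw n)))

/-- `i(Z_j)` acting on `P_n ⊗ Λ`. -/
def I1 (j : Fin n) : PL n →ₗ[ℂ] PL n := onL n (iMulF n (dualf n (idx1 n j)))

/-- `i(Z_{j̄})` acting on `P_n ⊗ Λ`. -/
def I2 (j : Fin n) : PL n →ₗ[ℂ] PL n := onL n (iMulF n (dualf n (idx2 n j)))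

/-- `i(W)` acting on `P_n ⊗ Λ`. -/
def Iw : PL n →ₗ[ℂ] PL n := onL n (iMulF n (dualf n (idxw n)))

/-- `θ_j(t) = −√(−1)·√t·(e(τ^j) a_j^* + e(τ^{j̄}) a_j) − √(−1)·e(τ^j) e(τ^{j̄}) i(W)`. -/
def theta (t : ℝ) (j : Fin n) : PL n →ₗ[ℂ] PL n :=
  (-(Complex.I * (Real.sqrt t : ℝ))) • (E1 n j ∘ₗ Astar n j + E2 n j ∘ₗ A n j)
    - Complex.I • (E1 n j ∘ₗ E2 n j ∘ₗ Iw n)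

/-- `θ_j^†(t) = √(−1)·√t·(i(Z_j) a_j + i(Z_{j̄}) a_j^*) + √(−1)·e(τ^w) i(Z_{j̄}) i(Z_j)`. -/
def thetaDag (t : ℝ) (j : Fin n) : PL n →ₗ[ℂ] PL n :=
  (Complex.I * (Real.sqrt t : ℝ)) • (I1 n j ∘ₗ A n j + I2 n j ∘ₗ Astar n j)
    + Complex.I • (Ew n ∘ₗ I2 n j ∘ₗ I1 n j)

/-- `d(t) = Σ_j θ_j(t) − √(−1)·t·e(τ^w)`. -/
def dOp (t : ℝ) : PL n →ₗ[ℂ] PL n :=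
  (∑ j : Fin n, theta n t j) - (Complex.I * (t : ℝ)) • Ew n

/-- `U_{jj} = a_j^* a_j − e(τ^j) i(Z_j) + e(τ^{j̄}) i(Z_{j̄})`. -/
def Udiag (j : Fin n) : PL n →ₗ[ℂ] PL n :=
  Astar n j ∘ₗ A n j - E1 n j ∘ₗ I1 n j + E2 n j ∘ₗ I2 n j

/-- The `(i,j)` transposition operator `U_{ij} = a_i^* a_j − e(τ^j) i(Z_i) + e(τ^{ī}) i(Z_{j̄})`. -/
def Uoff (i j : Fin n) : PL n →ₗ[ℂ] PL n :=
  Astar n i ∘ₗ A n j - E1 n j ∘ₗ I1 n i + E2 n i ∘ₗ I2 n j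

/-- The degree-`p` component `Λ^p` of the exterior algebra, as a submodule. -/
def LamP (p : ℕ) : Submodule ℂ (Lam n) :=
  LinearMap.range (ExteriorAlgebra.ι ℂ : Vc n →ₗ[ℂ] Lam n) ^ p

/-- The subspace `P_n ⊗ Λ^p` of `P_n ⊗ Λ`. -/
def Wp (p : ℕ) : Submodule ℂ (PL n) :=
  LinearMap.range (TensorProduct.map (LinearMap.id : P n →ₗ[ℂ] P n) (LamP n p).subtype)

/-- The simultaneous eigenspace `V^{p,n,γ} = {v ∈ P_n ⊗ Λ^p : U_{jj} v = γ_j v for all j}`. -/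
def Vpγ (p : ℕ) (γ : Fin n → ℤ) : Submodule ℂ (PL n) :=
  Wp n p ⊓ ⨅ j : Fin n, Module.End.eigenspace (Udiag n j) ((γ j : ℂ))


set_option maxHeartbeats 1600000
set_option synthInstance.maxHeartbeats 400000
attribute [local instance] LieRing.ofAssociativeRing

/-! ### Generic algebra helpers (proved in clean contexts) -/

section Generic

variable {R : Type*} [Ring R]

private lemma g_lie_expandL (a b c : R) : ⁅a * b, c⁆ = a * ⁅b, c⁆ + ⁅a, c⁆ * b := by
  simp only [Ring.lie_def]; noncomm_ring

private lemma g_commute_of_anti' {x a b : R} (h1 : x * a = -(a * x)) (h2 : x * b = -(b * x)) :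
    Commute x (a * b) := by
  have h : x * (a * b) = a * b * x := by
    rw [← mul_assoc, h1, neg_mul, mul_assoc, h2, mul_neg, neg_neg, mul_assoc]
  exact h

private lemma g_anti_symm {a b : R} (h : a * b = -(b * a)) : b * a = -(a * b) := by
  rw [h, neg_neg]

section GComm
variable (S : Type*) [Ring S]
private lemma g_cmul {x y z : S} (h1 : Commute x z) (h2 : Commute y z) : Commute (x * y) z :=
  h1.mul_left h2
private lemma g_cmulr {x y z : S} (h1 : Commute x y) (h2 : Commute x z) : Commute x (y * z) :=
  h1.mul_right h2
private lemma g_caddl {x y z : S} (h1 : Commute x z) (h2 : Commute y z) : Commute (x + y) z :=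
  h1.add_left h2
private lemma g_csubl {x y z : S} (h1 : Commute x z) (h2 : Commute y z) : Commute (x - y) z :=
  h1.sub_left h2
private lemma g_caddr {x y z : S} (h1 : Commute x y) (h2 : Commute x z) : Commute x (y + z) :=
  h1.add_right h2
private lemma g_csubr {x y z : S} (h1 : Commute x y) (h2 : Commute x z) : Commute x (y - z) :=
  h1.sub_right h2
private lemma g_csmul [Algebra ℂ S] {x y : S} (c : ℂ) (h : Commute x y) : Commute (c • x) y :=
  h.smul_left c
private lemma g_clie {x y : S} (h : Commute x y) : ⁅x, y⁆ = 0 := h.lie_eq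
private lemma g_comm_of_lie {x y : S} (h : ⁅x, y⁆ = 0) : x * y = y * x := by
  rw [Ring.lie_def] at h
  exact sub_eq_zero.mp h
private lemma g_commute_of_anti2 {x a b : S} (h1 : x * a = -(a * x)) (h2 : x * b = -(b * x)) :
    Commute x (a * b) := g_commute_of_anti' h1 h2
private lemma g_anti_symm2 {a b : S} (h : a * b = -(b * a)) : b * a = -(a * b) :=
  g_anti_symm h
end GComm

private lemma g_sum_lie {ι : Type*} (s : Finset ι) (f : ι → R) (a : R) :
    ⁅∑ k ∈ s, f k, a⁆ = ∑ k ∈ s, ⁅f k, a⁆ := by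
  simp only [Ring.lie_def, Finset.sum_mul, Finset.mul_sum, Finset.sum_sub_distrib]

private lemma g_sum_split {M : Type*} [AddCommMonoid M] {ι : Type*} [Fintype ι] [DecidableEq ι]
    {i j : ι} (hij : i ≠ j) (f : ι → M) (hz : ∀ k, k ≠ i → k ≠ j → f k = 0) :
    ∑ k : ι, f k = f i + f j := by
  classical
  rw [← Finset.sum_subset (Finset.subset_univ ({i, j} : Finset ι))
    (fun k _ hk => by
      simp only [Finset.mem_insert, Finset.mem_singleton, not_or] at hk
      exact hz k hk.1 hk.2)]
  exact Finset.sum_pair hij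

variable {G : Type*} [AddCommGroup G]

private lemma g_fix1 (x : G) : 0 - -x + 0 = x := by abel
private lemma g_fix2 (y z : G) : -y - (z - y) = -z := by abel
private lemma g_fix3 (x y : G) : x + y - x = y := by abel
private lemma g_fix4 (x y : G) : x - (x + y) = -y := by abel
private lemma g_fix5 (x : G) : x - 0 + 0 = x := by abel
private lemma g_fix6 (x : G) : 0 - 0 + x = x := by abel

private lemma g_cancel {A : Type*} [Ring A] [Algebra ℂ A] (c d : ℂ) (x y z : A) :
    c • (x + y) - d • z + (c • (-x + -y) - d • -z) = 0 := by
  module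

end Generic

/-! ### Index lemmas -/

section IndexLemmas

variable {n : ℕ}

private lemma idx1_ne_idx1 {k l : Fin n} (h : k ≠ l) : idx1 n k ≠ idx1 n l := by
  simp only [idx1, ne_eq, Fin.mk.injEq]
  exact fun hh => h (Fin.ext hh)

private lemma idx2_ne_idx2 {k l : Fin n} (h : k ≠ l) : idx2 n k ≠ idx2 n l := by
  simp only [idx2, ne_eq, Fin.mk.injEq]
  intro hh
  exact h (Fin.ext (by omega))

private lemma idx1_ne_idx2 (k l : Fin n) : idx1 n k ≠ idx2 n l := by
  have := k.2
  simp only [idx1, idx2, ne_eq, Fin.mk.injEq]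
  omega

private lemma idx1_ne_idxw (k : Fin n) : idx1 n k ≠ idxw n := by
  have := k.2
  simp only [idx1, idxw, ne_eq, Fin.mk.injEq]
  omega

private lemma idx2_ne_idxw (k : Fin n) : idx2 n k ≠ idxw n := by
  have := k.2
  simp only [idx2, idxw, ne_eq, Fin.mk.injEq]
  omega

end IndexLemmas

/-! ### Operator algebra on the factors -/

section LambdaLevel

variable {n : ℕ}

private lemma eMulV_anti (v w : Vc n) :
    eMulV n v * eMulV n w = -(eMulV n w * eMulV n v) := by
  have h : ExteriorAlgebra.ι ℂ v * ExteriorAlgebra.ι ℂ w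
      = -(ExteriorAlgebra.ι ℂ w * ExteriorAlgebra.ι ℂ v) :=
    eq_neg_of_add_eq_zero_left (ExteriorAlgebra.ι_add_mul_swap v w)
  apply LinearMap.ext
  intro x
  simp only [Module.End.mul_apply, LinearMap.neg_apply, eMulV, LinearMap.mulLeft_apply]
  rw [← mul_assoc, h, neg_mul, mul_assoc]

private lemma iMulF_anti (f g : Module.Dual ℂ (Vc n)) :
    iMulF n f * iMulF n g = -(iMulF n g * iMulF n f) := by
  apply LinearMap.ext
  intro x
  simp only [Module.End.mul_apply, LinearMap.neg_apply, iMulF]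
  exact CliffordAlgebra.contractLeft_comm f g x

private lemma iMulF_eMulV (f : Module.Dual ℂ (Vc n)) (v : Vc n) :
    iMulF n f * eMulV n v = f v • (1 : Module.End ℂ (Lam n)) - eMulV n v * iMulF n f := by
  apply LinearMap.ext
  intro x
  simp only [Module.End.mul_apply, LinearMap.sub_apply, LinearMap.smul_apply, Module.End.one_apply,
    iMulF, eMulV, LinearMap.mulLeft_apply]
  exact CliffordAlgebra.contractLeft_ι_mul f v x

private lemma dualf_tau (a b : Fin (2 * n + 1)) :
    dualf n a (tau n b) = if a = b then 1 else 0 := by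
  simp [dualf, tau, Pi.single_apply]

end LambdaLevel

section PLevel

variable {n : ℕ}

private lemma pderiv_pderiv_comm (a b : Fin n) (p : P n) :
    MvPolynomial.pderiv a (MvPolynomial.pderiv b p)
      = MvPolynomial.pderiv b (MvPolynomial.pderiv a p) := by
  induction p using MvPolynomial.induction_on with
  | C c => simp
  | add p q hp hq => simp [hp, hq]
  | mul_X p k hp =>
    have h1 : ∀ c d : Fin n,
        MvPolynomial.pderiv c ((Pi.single d 1 : Fin n → MvPolynomial (Fin n) ℂ) k) = 0 := by
      intro c d
      rcases eq_or_ne k d with h | h <;> simp [Pi.single_apply, h]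
    simp only [MvPolynomial.pderiv_mul, MvPolynomial.pderiv_X, map_add, hp, h1]
    ring

private lemma aOp_mul_aStarOp_self (k : Fin n) :
    aOp n k * aStarOp n k = aStarOp n k * aOp n k + 1 := by
  refine LinearMap.ext fun p => ?_
  simp [aOp, aStarOp, MvPolynomial.pderiv_mul]
  try ring

private lemma aOp_mul_aStarOp_ne {k l : Fin n} (h : k ≠ l) :
    aOp n k * aStarOp n l = aStarOp n l * aOp n k := by
  refine LinearMap.ext fun p => ?_
  simp [aOp, aStarOp, MvPolynomial.pderiv_mul, MvPolynomial.pderiv_X_of_ne (Ne.symm h)]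

private lemma aOp_comm (k l : Fin n) : aOp n k * aOp n l = aOp n l * aOp n k := by
  refine LinearMap.ext fun p => ?_
  exact pderiv_pderiv_comm k l p

private lemma aStarOp_comm (k l : Fin n) :
    aStarOp n k * aStarOp n l = aStarOp n l * aStarOp n k := by
  refine LinearMap.ext fun p => ?_
  simp only [Module.End.mul_apply, aStarOp, LinearMap.mulLeft_apply]
  ring

end PLevel

section Lifts

variable {n : ℕ}

private lemma onP_mul (f g : P n →ₗ[ℂ] P n) : onP n (f * g) = onP n f * onP n g := by
  simp only [onP, Module.End.mul_eq_comp, LinearMap.rTensor_comp]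

private lemma onL_mul (f g : Lam n →ₗ[ℂ] Lam n) : onL n (f * g) = onL n f * onL n g := by
  simp only [onL, Module.End.mul_eq_comp, LinearMap.lTensor_comp]

private lemma onP_one : onP n (1 : Module.End ℂ (P n)) = 1 := by
  simp only [onP, Module.End.one_eq_id, LinearMap.rTensor_id]

private lemma onL_one : onL n (1 : Module.End ℂ (Lam n)) = 1 := by
  simp only [onL, Module.End.one_eq_id, LinearMap.lTensor_id]

private lemma onP_add (f g : P n →ₗ[ℂ] P n) : onP n (f + g) = onP n f + onP n g :=
  map_add (LinearMap.rTensorHom (Lam n)) f g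

private lemma onL_neg (f : Lam n →ₗ[ℂ] Lam n) : onL n (-f) = -onL n f :=
  map_neg (LinearMap.lTensorHom (P n)) f

private lemma onL_sub (f g : Lam n →ₗ[ℂ] Lam n) : onL n (f - g) = onL n f - onL n g :=
  map_sub (LinearMap.lTensorHom (P n)) f g

private lemma onP_onL_comm (f : P n →ₗ[ℂ] P n) (g : Lam n →ₗ[ℂ] Lam n) :
    Commute (onP n f) (onL n g) := by
  show onP n f * onL n g = onL n g * onP n f
  simp only [onP, onL, Module.End.mul_eq_comp, LinearMap.rTensor_comp_lTensor,
    LinearMap.lTensor_comp_rTensor]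

end Lifts

/-! ### Specialized (instance-stable) wrappers on `Module.End ℂ (PL n)` -/

section Wrappers

variable {n : ℕ}

private lemma lieE (x y : Module.End ℂ (PL n)) : ⁅x, y⁆ = x * y - y * x :=
  Ring.lie_def x y

private lemma clieE {x y : Module.End ℂ (PL n)} (h : Commute x y) : ⁅x, y⁆ = 0 := by
  have h2 := g_clie (Module.End ℂ (PL n)) h
  exact h2

private lemma lie_addE (x y z : Module.End ℂ (PL n)) : ⁅x, y + z⁆ = ⁅x, y⁆ + ⁅x, z⁆ :=
  lie_add x y z

private lemma lie_subE (x y z : Module.End ℂ (PL n)) : ⁅x, y - z⁆ = ⁅x, y⁆ - ⁅x, z⁆ :=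
  lie_sub x y z

private lemma add_lieE (x y z : Module.End ℂ (PL n)) : ⁅x + y, z⁆ = ⁅x, z⁆ + ⁅y, z⁆ :=
  add_lie x y z

private lemma sub_lieE (x y z : Module.End ℂ (PL n)) : ⁅x - y, z⁆ = ⁅x, z⁆ - ⁅y, z⁆ :=
  sub_lie x y z

private lemma smul_lieE (c : ℂ) (x y : Module.End ℂ (PL n)) : ⁅c • x, y⁆ = c • ⁅x, y⁆ :=
  smul_lie c x y

private lemma lie_expandLE (a b c : Module.End ℂ (PL n)) :
    ⁅a * b, c⁆ = a * ⁅b, c⁆ + ⁅a, c⁆ * b :=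
  g_lie_expandL a b c

private lemma sum_lieE (f : Fin n → Module.End ℂ (PL n)) (a : Module.End ℂ (PL n)) :
    ⁅∑ k : Fin n, f k, a⁆ = ∑ k : Fin n, ⁅f k, a⁆ :=
  g_sum_lie Finset.univ f a

private lemma commute_of_antiE {x a b : Module.End ℂ (PL n)}
    (h1 : x * a = -(a * x)) (h2 : x * b = -(b * x)) : Commute x (a * b) := by
  have h := g_commute_of_anti2 (Module.End ℂ (PL n)) h1 h2
  exact h

private lemma anti_symmE {a b : Module.End ℂ (PL n)} (h : a * b = -(b * a)) :
    b * a = -(a * b) := by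
  have h2 := g_anti_symm2 (Module.End ℂ (PL n)) h
  exact h2

private lemma cmulE {x y z : Module.End ℂ (PL n)} (h1 : Commute x z) (h2 : Commute y z) :
    Commute (x * y) z := by
  have h := g_cmul (Module.End ℂ (PL n)) h1 h2
  exact h

private lemma cmulrE {x y z : Module.End ℂ (PL n)} (h1 : Commute x y) (h2 : Commute x z) :
    Commute x (y * z) := by
  have h := g_cmulr (Module.End ℂ (PL n)) h1 h2
  exact h

private lemma caddlE {x y z : Module.End ℂ (PL n)} (h1 : Commute x z) (h2 : Commute y z) :
    Commute (x + y) z := by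
  have h := g_caddl (Module.End ℂ (PL n)) h1 h2
  exact h

private lemma csublE {x y z : Module.End ℂ (PL n)} (h1 : Commute x z) (h2 : Commute y z) :
    Commute (x - y) z := by
  have h := g_csubl (Module.End ℂ (PL n)) h1 h2
  exact h

private lemma caddrE {x y z : Module.End ℂ (PL n)} (h1 : Commute x y) (h2 : Commute x z) :
    Commute x (y + z) := by
  have h := g_caddr (Module.End ℂ (PL n)) h1 h2
  exact h

private lemma csubrE {x y z : Module.End ℂ (PL n)} (h1 : Commute x y) (h2 : Commute x z) :
    Commute x (y - z) := by
  have h := g_csubr (Module.End ℂ (PL n)) h1 h2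
  exact h

private lemma csmullE {x y : Module.End ℂ (PL n)} (c : ℂ) (h : Commute x y) :
    Commute (c • x) y := by
  have h2 := g_csmul (Module.End ℂ (PL n)) c h
  exact h2

private lemma csymmE {x y : Module.End ℂ (PL n)} (h : Commute x y) : Commute y x := by
  show y * x = x * y
  exact (h : x * y = y * x).symm

private lemma massocE (a b c : Module.End ℂ (PL n)) : a * b * c = a * (b * c) := rfl

private lemma negmulE (x y : Module.End ℂ (PL n)) : -x * y = -(x * y) :=
  LinearMap.ext fun _ => rfl

private lemma mulnegE (x y : Module.End ℂ (PL n)) : x * -y = -(x * y) :=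
  LinearMap.ext fun v => map_neg x _

private lemma mulsubE (x y z : Module.End ℂ (PL n)) : x * (y - z) = x * y - x * z :=
  LinearMap.ext fun v => map_sub x _ _

private lemma muladdE (x y z : Module.End ℂ (PL n)) : x * (y + z) = x * y + x * z :=
  LinearMap.ext fun v => map_add x _ _

private lemma addmulE (x y z : Module.End ℂ (PL n)) : (x + y) * z = x * z + y * z :=
  LinearMap.ext fun _ => rfl

private lemma mulzeroE (x : Module.End ℂ (PL n)) : x * 0 = 0 :=
  LinearMap.ext fun _ => map_zero x

private lemma zeromulE (x : Module.End ℂ (PL n)) : (0 : Module.End ℂ (PL n)) * x = 0 :=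
  LinearMap.ext fun _ => rfl

private lemma muloneE (x : Module.End ℂ (PL n)) : x * 1 = x := rfl

private lemma onemulE (x : Module.End ℂ (PL n)) : (1 : Module.End ℂ (PL n)) * x = x := rfl

private lemma addzeroE (x : Module.End ℂ (PL n)) : x + 0 = x := add_zero x

private lemma zeroaddE (x : Module.End ℂ (PL n)) : (0 : Module.End ℂ (PL n)) + x = x :=
  zero_add x

private lemma smulzeroE (c : ℂ) : c • (0 : Module.End ℂ (PL n)) = 0 := smul_zero c

private lemma subzeroE (x : Module.End ℂ (PL n)) : x - 0 = x := sub_zero x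

private lemma fix1E (x : Module.End ℂ (PL n)) : 0 - -x + 0 = x := g_fix1 x
private lemma fix2E (y z : Module.End ℂ (PL n)) : -y - (z - y) = -z := g_fix2 y z
private lemma fix3E (x y : Module.End ℂ (PL n)) : x + y - x = y := g_fix3 x y
private lemma fix4E (x y : Module.End ℂ (PL n)) : x - (x + y) = -y := g_fix4 x y
private lemma fix5E (x : Module.End ℂ (PL n)) : x - 0 + 0 = x := g_fix5 x
private lemma fix6E (x : Module.End ℂ (PL n)) : 0 - 0 + x = x := g_fix6 x

end Wrappers

/-- Exterior multiplication by `τ^a` on `P_n ⊗ Λ`, uniform notation. -/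
private def EE (n : ℕ) (a : Fin (2 * n + 1)) : Module.End ℂ (PL n) :=
  onL n (eMulV n (tau n a))

/-- Interior multiplication by the `a`-th dual functional on `P_n ⊗ Λ`, uniform notation. -/
private def II (n : ℕ) (a : Fin (2 * n + 1)) : Module.End ℂ (PL n) :=
  onL n (iMulF n (dualf n a))

section PLRelations

variable {n : ℕ}

private lemma EE_anti (a b : Fin (2 * n + 1)) : EE n a * EE n b = -(EE n b * EE n a) := by
  rw [EE, EE, ← onL_mul, eMulV_anti, onL_neg, onL_mul]

private lemma II_anti (a b : Fin (2 * n + 1)) : II n a * II n b = -(II n b * II n a) := by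
  rw [II, II, ← onL_mul, iMulF_anti, onL_neg, onL_mul]

private lemma II_EE_ne {a b : Fin (2 * n + 1)} (h : a ≠ b) :
    II n a * EE n b = -(EE n b * II n a) := by
  have h0 : iMulF n (dualf n a) * eMulV n (tau n b)
      = -(eMulV n (tau n b) * iMulF n (dualf n a)) := by
    rw [iMulF_eMulV, dualf_tau, if_neg h, zero_smul, zero_sub]
  rw [II, EE, ← onL_mul, h0, onL_neg, onL_mul]

private lemma II_EE_self (a : Fin (2 * n + 1)) :
    II n a * EE n a = 1 - EE n a * II n a := by
  have h0 : iMulF n (dualf n a) * eMulV n (tau n a)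
      = 1 - eMulV n (tau n a) * iMulF n (dualf n a) := by
    rw [iMulF_eMulV, dualf_tau, if_pos rfl, one_smul]
  rw [II, EE, ← onL_mul, h0, onL_sub, onL_one, onL_mul]

private lemma A_Astar_self (k : Fin n) : A n k * Astar n k = Astar n k * A n k + 1 := by
  rw [A, Astar, ← onP_mul, aOp_mul_aStarOp_self, onP_add, onP_mul, onP_one]

private lemma A_Astar_ne {k l : Fin n} (h : k ≠ l) : A n k * Astar n l = Astar n l * A n k := by
  rw [A, Astar, ← onP_mul, aOp_mul_aStarOp_ne h, onP_mul]

private lemma A_comm (k l : Fin n) : A n k * A n l = A n l * A n k := by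
  rw [A, A, ← onP_mul, aOp_comm, onP_mul]

private lemma Astar_comm (k l : Fin n) : Astar n k * Astar n l = Astar n l * Astar n k := by
  rw [Astar, Astar, ← onP_mul, aStarOp_comm, onP_mul]

private lemma lie_EE_mix (a b : Fin (2 * n + 1)) :
    ⁅EE n a, EE n b * II n a⁆ = -(EE n b) := by
  rw [lieE]
  have h1 : EE n a * (EE n b * II n a) = -(EE n b * (EE n a * II n a)) := by
    rw [← massocE, EE_anti a b, negmulE, massocE]
  have h2 : EE n b * II n a * EE n a = EE n b - EE n b * (EE n a * II n a) := by
    rw [massocE, II_EE_self, mulsubE, muloneE]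
  rw [h1, h2, fix2E]

/-- A `P`-side operator commutes with any product `EE * II`. -/
private lemma commute_onP_EI (f : P n →ₗ[ℂ] P n) (a b : Fin (2 * n + 1)) :
    Commute (onP n f) (EE n a * II n b) :=
  cmulrE (onP_onL_comm _ _) (onP_onL_comm _ _)

private lemma commute_A_EI (k : Fin n) (a b : Fin (2 * n + 1)) :
    Commute (A n k) (EE n a * II n b) := by
  have h := commute_onP_EI (aOp n k) a b
  exact h

private lemma commute_Astar_EI (k : Fin n) (a b : Fin (2 * n + 1)) :
    Commute (Astar n k) (EE n a * II n b) := by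
  have h := commute_onP_EI (aStarOp n k) a b
  exact h

private lemma commute_EE_EI {a c : Fin (2 * n + 1)} (b : Fin (2 * n + 1)) (h : a ≠ c) :
    Commute (EE n a) (EE n b * II n c) :=
  commute_of_antiE (EE_anti a b) (anti_symmE (II_EE_ne (Ne.symm h)))

private lemma commute_II_EI {a b : Fin (2 * n + 1)} (c : Fin (2 * n + 1)) (h : a ≠ b) :
    Commute (II n a) (EE n b * II n c) :=
  commute_of_antiE (II_EE_ne h) (II_anti a c)

private lemma commute_EE_u1 (a : Fin (2 * n + 1)) (k l : Fin n) :
    Commute (EE n a) (Astar n k * A n l) :=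
  cmulrE (csymmE (onP_onL_comm _ _)) (csymmE (onP_onL_comm _ _))

private lemma commute_II_u1 (a : Fin (2 * n + 1)) (k l : Fin n) :
    Commute (II n a) (Astar n k * A n l) :=
  cmulrE (csymmE (onP_onL_comm _ _)) (csymmE (onP_onL_comm _ _))

end PLRelations
section MainLemmas

variable {n : ℕ}

/-- Build a `Commute` with `Uoff` from commutation with the three pieces. -/
private lemma commute_piece_Uoff {i j : Fin n} {x : Module.End ℂ (PL n)}
    (h1 : Commute x (Astar n i * A n j))
    (h2 : Commute x (EE n (idx1 n j) * II n (idx1 n i)))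
    (h3 : Commute x (EE n (idx2 n i) * II n (idx2 n j))) :
    Commute x (Uoff n i j) := by
  have h : Commute x (Astar n i * A n j - EE n (idx1 n j) * II n (idx1 n i)
      + EE n (idx2 n i) * II n (idx2 n j)) := caddrE (csubrE h1 h2) h3
  exact h

private lemma commute_EE_Uoff {i j : Fin n} {a : Fin (2 * n + 1)}
    (h1 : a ≠ idx1 n i) (h2 : a ≠ idx2 n j) : Commute (EE n a) (Uoff n i j) :=
  commute_piece_Uoff (commute_EE_u1 a i j) (commute_EE_EI _ h1) (commute_EE_EI _ h2)

private lemma commute_II_Uoff {i j : Fin n} {a : Fin (2 * n + 1)}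
    (h1 : a ≠ idx1 n j) (h2 : a ≠ idx2 n i) : Commute (II n a) (Uoff n i j) :=
  commute_piece_Uoff (commute_II_u1 a i j) (commute_II_EI _ h1) (commute_II_EI _ h2)

private lemma commute_A_Uoff {i j k : Fin n} (hk : k ≠ i) :
    Commute (A n k) (Uoff n i j) :=
  commute_piece_Uoff
    (cmulrE (A_Astar_ne hk) (A_comm k j))
    (commute_A_EI k _ _) (commute_A_EI k _ _)

private lemma commute_Astar_Uoff {i j k : Fin n} (hk : k ≠ j) :
    Commute (Astar n k) (Uoff n i j) :=
  commute_piece_Uoff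
    (cmulrE (Astar_comm k i) (csymmE (A_Astar_ne (Ne.symm hk))))
    (commute_Astar_EI k _ _) (commute_Astar_EI k _ _)

private lemma commute_theta_Uoff (t : ℝ) {i j k : Fin n} (hki : k ≠ i) (hkj : k ≠ j) :
    Commute (theta n t k) (Uoff n i j) := by
  have hE1 : Commute (EE n (idx1 n k)) (Uoff n i j) :=
    commute_EE_Uoff (idx1_ne_idx1 hki) (idx1_ne_idx2 k j)
  have hE2 : Commute (EE n (idx2 n k)) (Uoff n i j) :=
    commute_EE_Uoff (Ne.symm (idx1_ne_idx2 i k)) (idx2_ne_idx2 hkj)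
  have hIw : Commute (II n (idxw n)) (Uoff n i j) :=
    commute_II_Uoff (Ne.symm (idx1_ne_idxw j)) (Ne.symm (idx2_ne_idxw i))
  have hA : Commute (A n k) (Uoff n i j) := commute_A_Uoff hki
  have hAs : Commute (Astar n k) (Uoff n i j) := commute_Astar_Uoff hkj
  show Commute ((-(Complex.I * ((Real.sqrt t : ℝ) : ℂ)))
        • (EE n (idx1 n k) * Astar n k + EE n (idx2 n k) * A n k)
      - Complex.I • (EE n (idx1 n k) * (EE n (idx2 n k) * II n (idxw n)))) (Uoff n i j)
  exact csublE
    (csmullE _ (caddlE (cmulE hE1 hAs) (cmulE hE2 hA)))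
    (csmullE _ (cmulE hE1 (cmulE hE2 hIw)))

private lemma commute_Ew_Uoff {i j : Fin n} : Commute (Ew n) (Uoff n i j) :=
  commute_EE_Uoff (Ne.symm (idx1_ne_idxw i)) (Ne.symm (idx2_ne_idxw j))

private lemma lie_theta_pair (t : ℝ) {i j : Fin n} (hij : i ≠ j) :
    ⁅theta n t i, Uoff n i j⁆ + ⁅theta n t j, Uoff n i j⁆ = 0 := by
  have hU : Uoff n i j
      = Astar n i * A n j - EE n (idx1 n j) * II n (idx1 n i)
        + EE n (idx2 n i) * II n (idx2 n j) := rfl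
  -- elementary nonzero brackets
  have e1 : ⁅A n i, Astar n i * A n j⁆ = A n j := by
    rw [lieE]
    have h1 : A n i * (Astar n i * A n j) = Astar n i * (A n i * A n j) + A n j := by
      rw [← massocE, A_Astar_self, addmulE, onemulE, massocE]
    have h2 : Astar n i * A n j * A n i = Astar n i * (A n i * A n j) := by
      rw [massocE, A_comm j i]
    rw [h1, h2, fix3E]
  have e2 : ⁅Astar n j, Astar n i * A n j⁆ = -(Astar n i) := by
    rw [lieE]
    have h1 : Astar n j * (Astar n i * A n j) = Astar n i * (Astar n j * A n j) := by
      rw [← massocE, Astar_comm j i, massocE]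
    have h2 : Astar n i * A n j * Astar n j
        = Astar n i * (Astar n j * A n j) + Astar n i := by
      rw [massocE, A_Astar_self, muladdE, muloneE]
    rw [h1, h2, fix4E]
  have e3 : ⁅EE n (idx1 n i), EE n (idx1 n j) * II n (idx1 n i)⁆ = -(EE n (idx1 n j)) :=
    lie_EE_mix _ _
  have e4 : ⁅EE n (idx2 n j), EE n (idx2 n i) * II n (idx2 n j)⁆ = -(EE n (idx2 n i)) :=
    lie_EE_mix _ _
  -- brackets of the six blocks with Uoff
  have hB1 : ⁅EE n (idx1 n i) * Astar n i, Uoff n i j⁆ = EE n (idx1 n j) * Astar n i := by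
    have c1 : Commute (EE n (idx1 n i) * Astar n i) (Astar n i * A n j) :=
      cmulE (commute_EE_u1 _ i j)
        (cmulrE (Astar_comm i i) (csymmE (A_Astar_ne (Ne.symm hij))))
    have c3 : Commute (EE n (idx1 n i) * Astar n i) (EE n (idx2 n i) * II n (idx2 n j)) :=
      cmulE (commute_EE_EI _ (idx1_ne_idx2 i j)) (commute_Astar_EI i _ _)
    have c2 : ⁅EE n (idx1 n i) * Astar n i, EE n (idx1 n j) * II n (idx1 n i)⁆
        = -(EE n (idx1 n j) * Astar n i) := by
      rw [lie_expandLE, clieE (commute_Astar_EI i _ _), mulzeroE, zeroaddE, e3,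
        negmulE]
    rw [hU, lie_addE, lie_subE, clieE c1, clieE c3, c2, fix1E]
  have hB2 : ⁅EE n (idx2 n i) * A n i, Uoff n i j⁆ = EE n (idx2 n i) * A n j := by
    have c2 : Commute (EE n (idx2 n i) * A n i) (EE n (idx1 n j) * II n (idx1 n i)) :=
      cmulE (commute_EE_EI _ (Ne.symm (idx1_ne_idx2 i i))) (commute_A_EI i _ _)
    have c3 : Commute (EE n (idx2 n i) * A n i) (EE n (idx2 n i) * II n (idx2 n j)) :=
      cmulE (commute_EE_EI _ (idx2_ne_idx2 hij)) (commute_A_EI i _ _)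
    have c1 : ⁅EE n (idx2 n i) * A n i, Astar n i * A n j⁆ = EE n (idx2 n i) * A n j := by
      rw [lie_expandLE, e1, clieE (commute_EE_u1 _ i j), zeromulE, addzeroE]
    rw [hU, lie_addE, lie_subE, c1, clieE c2, clieE c3, fix5E]
  have hB3 : ⁅EE n (idx1 n i) * (EE n (idx2 n i) * II n (idxw n)), Uoff n i j⁆
      = EE n (idx1 n j) * (EE n (idx2 n i) * II n (idxw n)) := by
    have c1 : Commute (EE n (idx1 n i) * (EE n (idx2 n i) * II n (idxw n)))
        (Astar n i * A n j) :=
      cmulE (commute_EE_u1 _ i j) (cmulE (commute_EE_u1 _ i j) (commute_II_u1 _ i j))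
    have c3 : Commute (EE n (idx1 n i) * (EE n (idx2 n i) * II n (idxw n)))
        (EE n (idx2 n i) * II n (idx2 n j)) :=
      cmulE (commute_EE_EI _ (idx1_ne_idx2 i j))
        (cmulE (commute_EE_EI _ (idx2_ne_idx2 hij))
          (commute_II_EI _ (Ne.symm (idx2_ne_idxw i))))
    have cmid : Commute (EE n (idx2 n i) * II n (idxw n))
        (EE n (idx1 n j) * II n (idx1 n i)) :=
      cmulE (commute_EE_EI _ (Ne.symm (idx1_ne_idx2 i i)))
        (commute_II_EI _ (Ne.symm (idx1_ne_idxw j)))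
    have c2 : ⁅EE n (idx1 n i) * (EE n (idx2 n i) * II n (idxw n)),
        EE n (idx1 n j) * II n (idx1 n i)⁆
        = -(EE n (idx1 n j) * (EE n (idx2 n i) * II n (idxw n))) := by
      rw [lie_expandLE, clieE cmid, mulzeroE, zeroaddE, e3, negmulE]
    rw [hU, lie_addE, lie_subE, clieE c1, clieE c3, c2, fix1E]
  have hC1 : ⁅EE n (idx1 n j) * Astar n j, Uoff n i j⁆ = -(EE n (idx1 n j) * Astar n i) := by
    have c2 : Commute (EE n (idx1 n j) * Astar n j) (EE n (idx1 n j) * II n (idx1 n i)) :=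
      cmulE (commute_EE_EI _ (idx1_ne_idx1 (Ne.symm hij))) (commute_Astar_EI j _ _)
    have c3 : Commute (EE n (idx1 n j) * Astar n j) (EE n (idx2 n i) * II n (idx2 n j)) :=
      cmulE (commute_EE_EI _ (idx1_ne_idx2 j j)) (commute_Astar_EI j _ _)
    have c1 : ⁅EE n (idx1 n j) * Astar n j, Astar n i * A n j⁆
        = -(EE n (idx1 n j) * Astar n i) := by
      rw [lie_expandLE, e2, clieE (commute_EE_u1 _ i j), zeromulE, addzeroE, mulnegE]
    rw [hU, lie_addE, lie_subE, c1, clieE c2, clieE c3, fix5E]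
  have hC2 : ⁅EE n (idx2 n j) * A n j, Uoff n i j⁆ = -(EE n (idx2 n i) * A n j) := by
    have c1 : Commute (EE n (idx2 n j) * A n j) (Astar n i * A n j) :=
      cmulE (commute_EE_u1 _ i j) (cmulrE (A_Astar_ne (Ne.symm hij)) (A_comm j j))
    have c2 : Commute (EE n (idx2 n j) * A n j) (EE n (idx1 n j) * II n (idx1 n i)) :=
      cmulE (commute_EE_EI _ (Ne.symm (idx1_ne_idx2 i j))) (commute_A_EI j _ _)
    have c3 : ⁅EE n (idx2 n j) * A n j, EE n (idx2 n i) * II n (idx2 n j)⁆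
        = -(EE n (idx2 n i) * A n j) := by
      rw [lie_expandLE, clieE (commute_A_EI j _ _), mulzeroE, zeroaddE, e4, negmulE]
    rw [hU, lie_addE, lie_subE, clieE c1, clieE c2, c3, fix6E]
  have hC3 : ⁅EE n (idx1 n j) * (EE n (idx2 n j) * II n (idxw n)), Uoff n i j⁆
      = -(EE n (idx1 n j) * (EE n (idx2 n i) * II n (idxw n))) := by
    have c1 : Commute (EE n (idx1 n j) * (EE n (idx2 n j) * II n (idxw n)))
        (Astar n i * A n j) :=
      cmulE (commute_EE_u1 _ i j) (cmulE (commute_EE_u1 _ i j) (commute_II_u1 _ i j))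
    have c2 : Commute (EE n (idx1 n j) * (EE n (idx2 n j) * II n (idxw n)))
        (EE n (idx1 n j) * II n (idx1 n i)) :=
      cmulE (commute_EE_EI _ (idx1_ne_idx1 (Ne.symm hij)))
        (cmulE (commute_EE_EI _ (Ne.symm (idx1_ne_idx2 i j)))
          (commute_II_EI _ (Ne.symm (idx1_ne_idxw j))))
    have cE1j : Commute (EE n (idx1 n j)) (EE n (idx2 n i) * II n (idx2 n j)) :=
      commute_EE_EI _ (idx1_ne_idx2 j j)
    have cIw : Commute (II n (idxw n)) (EE n (idx2 n i) * II n (idx2 n j)) :=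
      commute_II_EI _ (Ne.symm (idx2_ne_idxw i))
    have c3 : ⁅EE n (idx1 n j) * (EE n (idx2 n j) * II n (idxw n)),
        EE n (idx2 n i) * II n (idx2 n j)⁆
        = -(EE n (idx1 n j) * (EE n (idx2 n i) * II n (idxw n))) := by
      rw [lie_expandLE, clieE cE1j, zeromulE, addzeroE, lie_expandLE, clieE cIw, mulzeroE,
        zeroaddE, e4, negmulE, mulnegE, ← massocE]
    rw [hU, lie_addE, lie_subE, clieE c1, clieE c2, c3, fix6E]
  -- assemble
  have hTi : ⁅theta n t i, Uoff n i j⁆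
      = (-(Complex.I * ((Real.sqrt t : ℝ) : ℂ)))
          • (EE n (idx1 n j) * Astar n i + EE n (idx2 n i) * A n j)
        - Complex.I • (EE n (idx1 n j) * (EE n (idx2 n i) * II n (idxw n))) := by
    show ⁅(-(Complex.I * ((Real.sqrt t : ℝ) : ℂ)))
          • (EE n (idx1 n i) * Astar n i + EE n (idx2 n i) * A n i)
        - Complex.I • (EE n (idx1 n i) * (EE n (idx2 n i) * II n (idxw n))), Uoff n i j⁆ = _
    rw [sub_lieE, smul_lieE, smul_lieE, add_lieE, hB1, hB2, hB3]
  have hTj : ⁅theta n t j, Uoff n i j⁆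
      = (-(Complex.I * ((Real.sqrt t : ℝ) : ℂ)))
          • (-(EE n (idx1 n j) * Astar n i) + -(EE n (idx2 n i) * A n j))
        - Complex.I • (-(EE n (idx1 n j) * (EE n (idx2 n i) * II n (idxw n)))) := by
    show ⁅(-(Complex.I * ((Real.sqrt t : ℝ) : ℂ)))
          • (EE n (idx1 n j) * Astar n j + EE n (idx2 n j) * A n j)
        - Complex.I • (EE n (idx1 n j) * (EE n (idx2 n j) * II n (idxw n))), Uoff n i j⁆ = _
    rw [sub_lieE, smul_lieE, smul_lieE, add_lieE, hC1, hC2, hC3]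
  rw [hTi, hTj]
  exact g_cancel (A := Module.End ℂ (PL n)) _ _ _ _ _

end MainLemmas
/-- For every `t > 0` and all `i ≠ j`, the operators `d(t)` and the transposition operator
`U_{ij}` on `P_n ⊗ Λ` commute. -/
theorem dOp_commutes_with_Uoff (n : ℕ) (hn : 1 ≤ n) (t : ℝ) (ht : 0 < t)
    (i j : Fin n) (hij : i ≠ j) :
    dOp n t ∘ₗ Uoff n i j = Uoff n i j ∘ₗ dOp n t := by
  have key : ⁅dOp n t, Uoff n i j⁆ = 0 := by
    show ⁅(∑ k : Fin n, theta n t k) - (Complex.I * ((t : ℝ) : ℂ)) • Ew n, Uoff n i j⁆ = 0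
    rw [sub_lieE, smul_lieE, clieE commute_Ew_Uoff, smulzeroE, subzeroE, sum_lieE]
    have hsum : (∑ k : Fin n, ⁅theta n t k, Uoff n i j⁆)
        = ⁅theta n t i, Uoff n i j⁆ + ⁅theta n t j, Uoff n i j⁆ :=
      g_sum_split hij _ (fun k hk1 hk2 => clieE (commute_theta_Uoff t hk1 hk2))
    rw [hsum]
    exact lie_theta_pair t hij
  have h2 := g_comm_of_lie (Module.End ℂ (PL n)) key
  exact h2

end HeisenbergModel
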